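/- Assume the general counting-measure setup. Let Ψ be an approximation function, Q₂ > Q₁ ≥ 1 integers, δ ∈ (0,1) and H ≥ 1 an integer. If Θ_Ψ(Q₁,Q₂) := min_{Q₁ ≤ q < Q₂} 2Ψ(q)/q < ν_ρ(δ), then μ_H(J_Ψ(Q₁,Q₂)) ≤ 4·∫_{J_Ψ(Q₁,Q₂)} ρ + S + 4·|J_Ψ(Q₁,Q₂)|·η_ρ(Θ_Ψ(Q₁,Q₂)), where S = (8δ/(1−δ) + E(H)/(Θ_Ψ(Q₁,Q₂)·min_{[0,1]} ρ))·(|J_Ψ(Q₁,Q₂)|·η_ρ(Θ_Ψ(Q₁,Q₂)) + ∫_{J_Ψ(Q₁,Q₂)} ρ) and |·| denotes Lebesgue measure. -/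

import Mathlib

open MeasureTheory Set

noncomputable section

def muH (X : ℕ → Finset ℝ) (H : ℕ) (A : Set ℝ) : ℝ :=
  (∑ α ∈ X H, Set.indicator A (fun _ => (1 : ℝ)) (Int.fract α)) / ((X H).card : ℝ)

def IsApproxFun (Ψ : ℝ → ℝ) : Prop :=
  (∀ x : ℝ, 0 < x → 0 < Ψ x) ∧ AntitoneOn Ψ (Set.Ioi 0) ∧
    Filter.Tendsto Ψ Filter.atTop (nhds 0)

def JPsi (Ψ : ℝ → ℝ) (Q₁ Q₂ : ℕ) : Set ℝ :=
  ⋃ q ∈ Finset.Ico Q₁ Q₂, ⋃ p ∈ Finset.range (q + 1),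
    Set.Icc ((p : ℝ) / q - Ψ q / q) ((p : ℝ) / q + Ψ q / q) ∩ Set.Icc 0 1

def Theta (Ψ : ℝ → ℝ) (Q₁ Q₂ : ℕ) : ℝ :=
  sInf ((fun q : ℕ => 2 * Ψ q / q) '' {q : ℕ | Q₁ ≤ q ∧ q < Q₂})

def etaMod (f : ℝ → ℝ) (ε : ℝ) : ℝ :=
  sInf {η : ℝ | 0 < η ∧ ∀ x ∈ Set.Icc (0 : ℝ) 1, ∀ y ∈ Set.Icc (0 : ℝ) 1,
    |x - y| ≤ ε → |f x - f y| ≤ η}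

def nuMod (f : ℝ → ℝ) (δ : ℝ) : ℝ :=
  sSup {ε : ℝ | 0 < ε ∧ etaMod f ε ≤ δ * sInf (f '' Set.Icc 0 1)}

set_option maxHeartbeats 4000000 in
theorem stmt10
    (X : ℕ → Finset ℝ) (hX : ∀ H : ℕ, 1 ≤ H → (X H).Nonempty)
    (ρ : ℝ → ℝ) (hρc : ContinuousOn ρ (Set.Icc 0 1))
    (hρpos : ∀ x ∈ Set.Icc (0 : ℝ) 1, 0 < ρ x)
    (hρ1 : (∫ x in (0 : ℝ)..1, ρ x) = 1)
    (E : ℕ → ℝ) (hE0 : ∀ H, 0 ≤ E H)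
    (hE : ∀ H : ℕ, 1 ≤ H → ∀ I : Set ℝ, I ⊆ Set.Icc 0 1 → I.OrdConnected →
      |muH X H I - ∫ x in I, ρ x| ≤ E H)
    (Ψ : ℝ → ℝ) (hΨ : IsApproxFun Ψ)
    (Q₁ Q₂ : ℕ) (hQ₁ : 1 ≤ Q₁) (hQ : Q₁ < Q₂)
    (δ : ℝ) (hδ : δ ∈ Set.Ioo (0 : ℝ) 1) (H : ℕ) (hH : 1 ≤ H)
    (hΘ : Theta Ψ Q₁ Q₂ < nuMod ρ δ) :
    muH X H (JPsi Ψ Q₁ Q₂) ≤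
      4 * (∫ x in JPsi Ψ Q₁ Q₂, ρ x) +
      (8 * δ / (1 - δ) + E H / (Theta Ψ Q₁ Q₂ * sInf (ρ '' Set.Icc 0 1))) *
        ((volume (JPsi Ψ Q₁ Q₂)).toReal * etaMod ρ (Theta Ψ Q₁ Q₂) +
          ∫ x in JPsi Ψ Q₁ Q₂, ρ x) +
      4 * (volume (JPsi Ψ Q₁ Q₂)).toReal * etaMod ρ (Theta Ψ Q₁ Q₂) := by
  classical
  obtain ⟨hδ0, hδ1⟩ := hδ
  set J := JPsi Ψ Q₁ Q₂ with hJdef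
  set Θ := Theta Ψ Q₁ Q₂ with hΘdef
  set m₀ := sInf (ρ '' Set.Icc 0 1) with hm₀def
  set η := etaMod ρ Θ with hηdef
  -- Ψ positivity on relevant range
  have hΨpos : ∀ q : ℕ, Q₁ ≤ q → 0 < Ψ q := by
    intro q hq
    have hq0 : (0:ℝ) < q := by
      have : 1 ≤ q := le_trans hQ₁ hq
      exact_mod_cast Nat.lt_of_lt_of_le Nat.zero_lt_one this
    exact hΨ.1 _ hq0
  have hq0 : ∀ q : ℕ, Q₁ ≤ q → (0:ℝ) < q := by
    intro q hq
    have : 1 ≤ q := le_trans hQ₁ hq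
    exact_mod_cast Nat.lt_of_lt_of_le Nat.zero_lt_one this
  -- Θ facts
  have hΘfin : ((fun q : ℕ => 2 * Ψ q / q) '' {q : ℕ | Q₁ ≤ q ∧ q < Q₂}).Finite := by
    apply Set.Finite.image
    exact Set.Finite.subset (Set.finite_Icc Q₁ Q₂) (fun q hq => Set.mem_Icc.mpr ⟨hq.1, hq.2.le⟩)
  have hΘne : ((fun q : ℕ => 2 * Ψ q / q) '' {q : ℕ | Q₁ ≤ q ∧ q < Q₂}).Nonempty :=
    ⟨_, ⟨Q₁, ⟨le_refl _, hQ⟩, rfl⟩⟩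
  have hΘmem : Θ ∈ (fun q : ℕ => 2 * Ψ q / q) '' {q : ℕ | Q₁ ≤ q ∧ q < Q₂} :=
    hΘne.csInf_mem hΘfin
  have hΘpos : 0 < Θ := by
    obtain ⟨q, hq, hqe⟩ := hΘmem
    rw [← hqe]
    have := hΨpos q hq.1
    have := hq0 q hq.1
    positivity
  have hΘle : ∀ q : ℕ, Q₁ ≤ q → q < Q₂ → Θ ≤ 2 * Ψ q / q := by
    intro q h1 h2
    apply csInf_le hΘfin.bddBelow ⟨q, ⟨h1, h2⟩, rfl⟩
  -- m₀ facts
  have hcomp : IsCompact (ρ '' Icc (0:ℝ) 1) := isCompact_Icc.image_of_continuousOn hρc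
  have hcompne : (ρ '' Icc (0:ℝ) 1).Nonempty := ⟨ρ 0, ⟨0, by simp, rfl⟩⟩
  have hm₀pos : 0 < m₀ := by
    obtain ⟨x, hx, hxe⟩ := hcomp.sInf_mem hcompne
    rw [hm₀def, ← hxe]; exact hρpos x hx
  have hm₀le : ∀ x ∈ Icc (0:ℝ) 1, m₀ ≤ ρ x := fun x hx =>
    csInf_le hcomp.bddBelow ⟨x, hx, rfl⟩
  have hΘm₀ : 0 < Θ * m₀ := mul_pos hΘpos hm₀pos
  -- J membership characterization
  have hJmem : ∀ x : ℝ, x ∈ J ↔ ∃ q p : ℕ, Q₁ ≤ q ∧ q < Q₂ ∧ p ≤ q ∧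
      max ((p:ℝ)/q - Ψ q/q) 0 ≤ x ∧ x ≤ min ((p:ℝ)/q + Ψ q/q) 1 := by
    intro x
    simp only [hJdef, JPsi, Set.mem_iUnion, Finset.mem_Ico, Finset.mem_range,
      Nat.lt_succ_iff, Set.Icc_inter_Icc, Set.mem_Icc]
    constructor
    · rintro ⟨q, ⟨h1, h2⟩, p, hp, h4, h5⟩
      exact ⟨q, p, h1, h2, hp, h4, h5⟩
    · rintro ⟨q, p, h1, h2, hp, h4, h5⟩
      exact ⟨q, ⟨h1, h2⟩, p, hp, h4, h5⟩
  have hKsub : ∀ q p : ℕ, Q₁ ≤ q → q < Q₂ → p ≤ q →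
      Icc (max ((p:ℝ)/q - Ψ q/q) 0) (min ((p:ℝ)/q + Ψ q/q) 1) ⊆ J := by
    intro q p h1 h2 hp u hu
    exact (hJmem u).mpr ⟨q, p, h1, h2, hp, hu.1, hu.2⟩
  have hJsub : J ⊆ Icc 0 1 := by
    intro x hx
    obtain ⟨q, p, _, _, _, h4, h5⟩ := (hJmem x).mp hx
    exact ⟨le_trans (le_max_right _ _) h4, le_trans h5 (min_le_right _ _)⟩
  have hJclosed : IsClosed J := by
    rw [hJdef, JPsi]
    apply Set.Finite.isClosed_biUnion (Finset.finite_toSet _)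
    intro q _
    apply Set.Finite.isClosed_biUnion (Finset.finite_toSet _)
    intro p _
    exact isClosed_Icc.inter isClosed_Icc
  have hJmeas : MeasurableSet J := hJclosed.measurableSet
  have h0J : (0:ℝ) ∈ J := by
    apply hKsub Q₁ 0 (le_refl _) hQ (Nat.zero_le _)
    have := hΨpos Q₁ (le_refl _)
    have := hq0 Q₁ (le_refl _)
    constructor
    · apply max_le _ (le_refl _)
      simp only [Nat.cast_zero, zero_div, zero_sub, neg_nonpos]
      positivity
    · apply le_min _ zero_le_one
      simp only [Nat.cast_zero, zero_div, zero_add]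
      positivity
  have h1J : (1:ℝ) ∈ J := by
    apply hKsub Q₁ Q₁ (le_refl _) hQ (le_refl _)
    have hψ := hΨpos Q₁ (le_refl _)
    have hq := hq0 Q₁ (le_refl _)
    have hd : (Q₁:ℝ)/Q₁ = 1 := div_self (ne_of_gt hq)
    rw [hd]
    have hr : 0 < Ψ Q₁ / Q₁ := by positivity
    constructor
    · apply max_le (by linarith) zero_le_one
    · apply le_min (by linarith) (le_refl _)
  -- G
  set G := Ioo (0:ℝ) 1 \ J with hGdef
  have hGopen : IsOpen G := isOpen_Ioo.sdiff hJclosed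
  have hGmeas : MeasurableSet G := hGopen.measurableSet
  have hGsub : G ⊆ Icc 0 1 := fun x hx => ⟨hx.1.1.le, hx.1.2.le⟩
  have hdisjJG : Disjoint J G := Set.disjoint_sdiff_right.mono_left (le_refl _)
  have hJG : J ∪ G = Icc 0 1 := by
    apply Set.Subset.antisymm (Set.union_subset hJsub hGsub)
    intro x hx
    by_cases hxJ : x ∈ J
    · exact Or.inl hxJ
    · refine Or.inr ⟨⟨?_, ?_⟩, hxJ⟩
      · rcases eq_or_lt_of_le hx.1 with h | h
        · exact absurd (h ▸ h0J) hxJ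
        · exact h
      · rcases eq_or_lt_of_le hx.2 with h | h
        · exact absurd (h ▸ h1J) hxJ
        · exact h
  -- integrability
  have hintI : IntegrableOn ρ (Icc (0:ℝ) 1) := hρc.integrableOn_Icc
  have hintOn : ∀ S : Set ℝ, S ⊆ Icc 0 1 → IntegrableOn ρ S := fun S h => hintI.mono_set h
  have hint_nonneg : ∀ S : Set ℝ, S ⊆ Icc 0 1 → MeasurableSet S → 0 ≤ ∫ x in S, ρ x :=
    fun S hS hSm => setIntegral_nonneg hSm (fun x hx => (hρpos x (hS hx)).le)
  have hvolfin : ∀ S : Set ℝ, S ⊆ Icc 0 1 → volume S ≠ ⊤ := by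
    intro S hS
    refine ne_of_lt (lt_of_le_of_lt (measure_mono hS) ?_)
    simp [Real.volume_Icc]
  have hint_ge : ∀ S : Set ℝ, S ⊆ Icc 0 1 → MeasurableSet S →
      m₀ * (volume S).toReal ≤ ∫ x in S, ρ x := fun S hS hSm =>
    by have h := setIntegral_ge_of_const_le_real hSm (hvolfin S hS) (fun x hx => hm₀le x (hS hx)) (hintOn S hS)
       exact h
  have hint_mono : ∀ S T : Set ℝ, S ⊆ T → T ⊆ Icc 0 1 → MeasurableSet T →
      (∫ x in S, ρ x) ≤ ∫ x in T, ρ x := by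
    intro S T hST hT hTm
    apply setIntegral_mono_set (hintOn T hT) ?_ (HasSubset.Subset.eventuallyLE hST)
    rw [Filter.EventuallyLE, ae_restrict_iff' hTm]
    exact Filter.Eventually.of_forall fun x hx => (hρpos x (hT hx)).le
  have hint_union : ∀ S T : Set ℝ, Disjoint S T → MeasurableSet T → S ⊆ Icc 0 1 → T ⊆ Icc 0 1 →
      (∫ x in S ∪ T, ρ x) = (∫ x in S, ρ x) + ∫ x in T, ρ x := fun S T h hTm hS hT =>
    setIntegral_union h hTm (hintOn S hS) (hintOn T hT)
  have hint_total : (∫ x in J, ρ x) + (∫ x in G, ρ x) = 1 := by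
    rw [← hint_union J G hdisjJG hGmeas hJsub hGsub, hJG]
    rw [integral_Icc_eq_integral_Ioc, ← intervalIntegral.integral_of_le zero_le_one]
    exact hρ1
  -- muH facts
  have hcardpos : (0:ℝ) < ((X H).card : ℝ) := by
    exact_mod_cast Finset.card_pos.mpr (hX H hH)
  have hmuH_empty : muH X H ∅ = 0 := by simp [muH]
  have hmuH_union : ∀ A B : Set ℝ, Disjoint A B →
      muH X H (A ∪ B) = muH X H A + muH X H B := by
    intro A B hAB
    unfold muH
    rw [← add_div]
    congr 1
    rw [← Finset.sum_add_distrib]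
    apply Finset.sum_congr rfl
    intro α _
    rw [Set.indicator_union_of_disjoint hAB]
  have hmuH_Icc : muH X H (Icc 0 1) = 1 := by
    unfold muH
    have h1 : ∀ α : ℝ, Set.indicator (Icc (0:ℝ) 1) (fun _ => (1:ℝ)) (Int.fract α) = 1 :=
      fun α => Set.indicator_of_mem (Set.mem_Icc.mpr ⟨Int.fract_nonneg α, (Int.fract_lt_one α).le⟩) _
    simp only [h1, Finset.sum_const, nsmul_eq_mul, mul_one]
    exact div_self (ne_of_gt hcardpos)
  have hmuH_JG : muH X H J + muH X H G = 1 := by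
    rw [← hmuH_union J G hdisjJG, hJG, hmuH_Icc]
  have hElow : ∀ a b : ℝ, 0 ≤ a → b ≤ 1 → (∫ x in Ioo a b, ρ x) - E H ≤ muH X H (Ioo a b) := by
    intro a b ha hb
    have := hE H hH (Ioo a b) (by
      intro x hx
      obtain ⟨h1, h2⟩ := Set.mem_Ioo.mp hx
      exact Set.mem_Icc.mpr ⟨le_trans ha h1.le, le_trans h2.le hb⟩)
      Set.ordConnected_Ioo
    have := abs_le.mp this
    linarith [this.1]
-- block-end structure lemma
  have hYex : ∀ z : ℝ, z ∈ J → ∃ y, z ≤ y ∧ y ≤ 1 ∧ Icc z y ⊆ J ∧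
      (∀ b, b ≤ 1 → Icc z b ⊆ J → b ≤ y) ∧
      (y < 1 → ∃ z', y < z' ∧ z' < 1 ∧ z' ∈ J ∧ Ioo y z' ∩ J = ∅) := by
    intro z hzJ
    have hz01 := hJsub hzJ
    have hz0 : (0:ℝ) ≤ z := (Set.mem_Icc.mp hz01).1
    have hz1 : z ≤ 1 := (Set.mem_Icc.mp hz01).2
    set S : Set ℝ := {t | t ≤ 1 ∧ Icc z t ⊆ J} with hSdef
    have hSmem : ∀ t : ℝ, t ∈ S ↔ (t ≤ 1 ∧ Icc z t ⊆ J) := by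
      intro t; rw [hSdef]; exact Iff.rfl
    have hzS : z ∈ S := (hSmem z).mpr ⟨hz1, by
      rw [Set.Icc_self]; exact Set.singleton_subset_iff.mpr hzJ⟩
    have hbdd : BddAbove S := ⟨1, fun t ht => ((hSmem t).mp ht).1⟩
    set y := sSup S with hydef
    have h1 : z ≤ y := le_csSup hbdd hzS
    have h2 : y ≤ 1 := csSup_le ⟨z, hzS⟩ (fun t ht => ((hSmem t).mp ht).1)
    have hIcoJ : Ico z y ⊆ J := by
      intro u hu
      obtain ⟨s, hsS, hus⟩ := exists_lt_of_lt_csSup ⟨z, hzS⟩ hu.2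
      exact ((hSmem s).mp hsS).2 (Set.mem_Icc.mpr ⟨hu.1, hus.le⟩)
    have hyJ : y ∈ J := by
      rcases eq_or_lt_of_le h1 with he | hl
      · rwa [← he]
      · have hcl : y ∈ closure (Ico z y) := by
          rw [closure_Ico (ne_of_lt hl)]
          exact Set.mem_Icc.mpr ⟨h1, le_refl _⟩
        have := closure_mono hIcoJ hcl
        rwa [hJclosed.closure_eq] at this
    have h3 : Icc z y ⊆ J := by
      intro t ht
      rcases eq_or_lt_of_le ht.2 with he | hty
      · rwa [he]
      · exact hIcoJ (Set.mem_Ico.mpr ⟨ht.1, hty⟩)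
    have h4 : ∀ b, b ≤ 1 → Icc z b ⊆ J → b ≤ y := fun b hb hsub =>
      le_csSup hbdd ((hSmem b).mpr ⟨hb, hsub⟩)
    refine ⟨y, h1, h2, h3, h4, ?_⟩
    intro hy1
    have hmax : ∀ b, y < b → b ≤ 1 → ¬ Icc y b ⊆ J := by
      intro b hyb hb1 hsub
      have hzb : Icc z b ⊆ J := by
        rw [← Set.Icc_union_Icc_eq_Icc h1 hyb.le]
        exact Set.union_subset h3 hsub
      exact absurd (h4 b hb1 hzb) (not_le.mpr hyb)
    set A : Set ℝ :=
      {a | (∃ q p : ℕ, Q₁ ≤ q ∧ q < Q₂ ∧ p ≤ q ∧ a = max ((p:ℝ)/q - Ψ q/q) 0) ∧ y < a}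
      with hAdef
    have hAmem : ∀ a : ℝ, a ∈ A ↔
        ((∃ q p : ℕ, Q₁ ≤ q ∧ q < Q₂ ∧ p ≤ q ∧ a = max ((p:ℝ)/q - Ψ q/q) 0) ∧ y < a) := by
      intro a; rw [hAdef]; exact Iff.rfl
    have hAfin : A.Finite := by
      apply Set.Finite.subset (Set.Finite.image
        (fun qp : ℕ × ℕ => max ((qp.2:ℝ)/qp.1 - Ψ qp.1/qp.1) 0)
        (Set.Finite.prod (Set.finite_Icc 0 Q₂) (Set.finite_Icc 0 Q₂)))
      intro a ha
      obtain ⟨⟨q, p, hh1, hh2, hh3, hh4⟩, _⟩ := (hAmem a).mp ha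
      exact ⟨(q, p), Set.mem_prod.mpr ⟨Set.mem_Icc.mpr ⟨Nat.zero_le _, hh2.le⟩,
        Set.mem_Icc.mpr ⟨Nat.zero_le _, le_trans hh3 hh2.le⟩⟩, hh4.symm⟩
    have hright : ∀ t, t ∈ J → y < t → ∃ a ∈ A, a ≤ t := by
      intro t htJ hyt
      obtain ⟨q, p, hq1', hq2', hp', ha', hb'⟩ := (hJmem t).mp htJ
      by_cases hay : max ((p:ℝ)/q - Ψ q/q) 0 ≤ y
      · exfalso
        have hyb : y < min ((p:ℝ)/q + Ψ q/q) 1 := lt_of_lt_of_le hyt hb'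
        apply hmax _ hyb (min_le_right _ _)
        intro u hu
        exact hKsub q p hq1' hq2' hp' (Set.mem_Icc.mpr ⟨le_trans hay hu.1, hu.2⟩)
      · push_neg at hay
        exact ⟨_, (hAmem _).mpr ⟨⟨q, p, hq1', hq2', hp', rfl⟩, hay⟩, ha'⟩
    have hAne : A.Nonempty := by
      obtain ⟨a, haA, _⟩ := hright 1 h1J hy1
      exact ⟨a, haA⟩
    have hεgt : y < sInf A := ((hAmem _).mp (hAne.csInf_mem hAfin)).2
    have hlow : ∀ t, t ∈ J → y < t → sInf A ≤ t := by
      intro t htJ hyt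
      obtain ⟨a, haA, hat⟩ := hright t htJ hyt
      exact le_trans (csInf_le hAfin.bddBelow haA) hat
    set T := J ∩ Icc (sInf A) 1 with hTdef
    have hTeq : J ∩ Ioc y 1 = T := by
      apply Set.Subset.antisymm
      · intro t ht
        exact Set.mem_inter ht.1 (Set.mem_Icc.mpr ⟨hlow t ht.1 ht.2.1, ht.2.2⟩)
      · intro t ht
        exact Set.mem_inter ht.1 (Set.mem_Ioc.mpr ⟨lt_of_lt_of_le hεgt ht.2.1, ht.2.2⟩)
    have hTne : T.Nonempty := ⟨1, Set.mem_inter h1J (Set.mem_Icc.mpr ⟨hlow 1 h1J hy1, le_refl 1⟩)⟩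
    have hTcl : IsClosed T := by rw [hTdef]; exact hJclosed.inter isClosed_Icc
    have hTbdd : BddBelow T := ⟨0, fun t ht => (hJsub ht.1).1⟩
    set z' := sInf T with hz'def
    have hz'T : z' ∈ T := hTcl.csInf_mem hTne hTbdd
    have hz'J : z' ∈ J := hz'T.1
    have hyz' : y < z' := lt_of_lt_of_le hεgt hz'T.2.1
    have hz'le1 : z' ≤ 1 := (hJsub hz'J).2
    have hgap : Ioo y z' ∩ J = ∅ := by
      apply Set.eq_empty_iff_forall_notMem.mpr
      intro t ht
      have htT : t ∈ T := hTeq ▸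
        (Set.mem_inter ht.2 (Set.mem_Ioc.mpr ⟨ht.1.1, le_trans ht.1.2.le hz'le1⟩))
      exact absurd (csInf_le hTbdd htT) (not_le.mpr ht.1.2)
    have hz'1 : z' < 1 := by
      have hψ := hΨpos Q₁ (le_refl _)
      have hqq := hq0 Q₁ (le_refl _)
      have hd : (Q₁:ℝ)/Q₁ = 1 := div_self (ne_of_gt hqq)
      have hr : 0 < Ψ Q₁/Q₁ := by positivity
      have ha₂1 : max (1 - Ψ Q₁/Q₁) 0 < 1 := max_lt (by linarith) one_pos
      have hKsub' : Icc (max (1 - Ψ Q₁/Q₁) 0) 1 ⊆ J := by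
        have hK := hKsub Q₁ Q₁ (le_refl _) hQ (le_refl _)
        rw [hd] at hK
        have hbK : min (1 + Ψ Q₁/Q₁) 1 = 1 := min_eq_right (by linarith)
        rwa [hbK] at hK
      rcases le_or_gt (max (1 - Ψ Q₁/Q₁) 0) y with hc | hc
      · exact absurd (fun u hu => hKsub' (Set.mem_Icc.mpr ⟨le_trans hc hu.1, hu.2⟩))
          (hmax 1 hy1 (le_refl _))
      · have : max (1 - Ψ Q₁/Q₁) 0 ∈ T := hTeq ▸ Set.mem_inter
          (hKsub' (Set.mem_Icc.mpr ⟨le_refl _, ha₂1.le⟩)) (Set.mem_Ioc.mpr ⟨hc, ha₂1.le⟩)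
        exact lt_of_le_of_lt (csInf_le hTbdd this) ha₂1
    exact ⟨z', hyz', hz'1, hz'J, hgap⟩
  have hblock : ∀ z y : ℝ, 0 < z → z ∈ J → (∃ ε > 0, Ioo (z - ε) z ∩ J = ∅) →
      Icc z y ⊆ J → (∀ b, b ≤ 1 → Icc z b ⊆ J → b ≤ y) → y ≤ 1 →
      ((y = 1 ∧ Θ/2 ≤ 1 - z) ∨ (y < 1 ∧ Θ ≤ y - z)) := by
    rintro z y hz0 hzJ ⟨ε, hε, hgapL⟩ hzy hub hy1
    obtain ⟨q, p, hq1', hq2', hp', ha', hb'⟩ := (hJmem z).mp hzJ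
    have hqq := hq0 q hq1'
    have hψ := hΨpos q hq1'
    have hr : 0 < Ψ q / q := by positivity
    have hcle1 : (p:ℝ)/q ≤ 1 := by
      rw [div_le_one hqq]; exact_mod_cast hp'
    have haz : max ((p:ℝ)/q - Ψ q/q) 0 = z := by
      rcases eq_or_lt_of_le ha' with he | hl
      · exact he
      · exfalso
        have hwz : max (max ((p:ℝ)/q - Ψ q/q) 0) (z - ε) < z := max_lt hl (by linarith)
        set w := max (max ((p:ℝ)/q - Ψ q/q) 0) (z - ε) with hwdef
        set u := (w + z)/2 with hudef
        have hu1 : w < u := by rw [hudef]; linarith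
        have hu2 : u < z := by rw [hudef]; linarith
        have huJ : u ∈ J := hKsub q p hq1' hq2' hp' (Set.mem_Icc.mpr
          ⟨le_trans (le_max_left _ _) hu1.le, le_trans hu2.le hb'⟩)
        have huG : u ∈ Ioo (z - ε) z ∩ J :=
          Set.mem_inter (Set.mem_Ioo.mpr ⟨lt_of_le_of_lt (le_max_right _ _) hu1, hu2⟩) huJ
        rw [hgapL] at huG
        exact huG
    have hcrz : (p:ℝ)/q - Ψ q/q = z := by
      rcases le_or_gt ((p:ℝ)/q - Ψ q/q) 0 with hle | hlt
      · exfalso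
        rw [max_eq_right hle] at haz
        exact absurd haz.symm (ne_of_gt hz0)
      · rwa [max_eq_left hlt.le] at haz
    have hΘ2r : Θ ≤ 2 * (Ψ q / q) := by
      have := hΘle q hq1' hq2'
      rwa [mul_div_assoc] at this
    rcases le_or_gt 1 ((p:ℝ)/q + Ψ q/q) with hge | hlt1
    · have hsub1 : Icc z 1 ⊆ J := by
        have hK := hKsub q p hq1' hq2' hp'
        rwa [min_eq_right hge, haz] at hK
      have hy : y = 1 := le_antisymm hy1 (hub 1 (le_refl _) hsub1)
      left
      refine ⟨hy, ?_⟩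
      have h1z : Ψ q / q ≤ 1 - z := by rw [← hcrz]; linarith
      linarith
    · have hsub2 : Icc z ((p:ℝ)/q + Ψ q/q) ⊆ J := by
        have hK := hKsub q p hq1' hq2' hp'
        rwa [min_eq_left hlt1.le, haz] at hK
      have hyb : (p:ℝ)/q + Ψ q/q ≤ y := hub _ hlt1.le hsub2
      have hylen : Θ ≤ y - z := by linarith
      rcases eq_or_lt_of_le hy1 with he | hlt
      · left
        refine ⟨he, by rw [← he]; linarith⟩
      · right
        exact ⟨hlt, hylen⟩
  have hbase : ∀ z : ℝ, 0 < z → z < 1 → Icc z 1 ⊆ J → Θ/2 ≤ 1 - z →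
      (∫ x in G ∩ Ioo z 1, ρ x) -
        ((∫ x in J ∩ Ioc z 1, ρ x) - Θ/2 * m₀)/(Θ * m₀) * E H ≤ muH X H (G ∩ Ioo z 1) := by
    intro z hz0 hz1 hIcc hΘz
    have hGe : G ∩ Ioo z 1 = ∅ := by
      apply Set.eq_empty_iff_forall_notMem.mpr
      intro t ht
      exact ht.1.2 (hIcc (Set.mem_Icc.mpr ⟨ht.2.1.le, ht.2.2.le⟩))
    have hJz : Ioc z 1 ⊆ J ∩ Ioc z 1 := fun t ht =>
      Set.mem_inter (hIcc (Set.mem_Icc.mpr ⟨ht.1.le, ht.2⟩)) ht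
    have hge : m₀ * (1 - z) ≤ ∫ x in J ∩ Ioc z 1, ρ x := by
      have h1 := hint_ge (Ioc z 1)
        (fun t ht => Set.mem_Icc.mpr ⟨le_trans hz0.le ht.1.le, ht.2⟩) measurableSet_Ioc
      rw [Real.volume_Ioc, ENNReal.toReal_ofReal (by linarith)] at h1
      have h2 := hint_mono (Ioc z 1) (J ∩ Ioc z 1) hJz
        (fun t ht => hJsub ht.1) (hJmeas.inter measurableSet_Ioc)
      linarith
    have hφ : 0 ≤ ((∫ x in J ∩ Ioc z 1, ρ x) - Θ/2 * m₀)/(Θ * m₀) * E H := by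
      apply mul_nonneg (div_nonneg ?_ hΘm₀.le) (hE0 H)
      nlinarith [hm₀pos]
    rw [hGe, hmuH_empty, setIntegral_empty]
    linarith
  have hD : ∀ n : ℕ, ∀ z : ℝ, 0 < z → z < 1 → z ∈ J →
      (∃ ε > 0, Ioo (z - ε) z ∩ J = ∅) →
      (∫ x in J ∩ Ioc z 1, ρ x) ≤ n * (Θ * m₀) →
      (∫ x in G ∩ Ioo z 1, ρ x) -
        ((∫ x in J ∩ Ioc z 1, ρ x) - Θ/2 * m₀)/(Θ * m₀) * E H ≤ muH X H (G ∩ Ioo z 1) := by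
    intro n
    induction n with
    | zero =>
      intro z hz0 hz1 hzJ hgapL hfuel
      obtain ⟨y, hzy, hy1, hIccJ, hub, hgapex⟩ := hYex z hzJ
      rcases hblock z y hz0 hzJ hgapL hIccJ hub hy1 with ⟨hYeq, hlen⟩ | ⟨hYlt, hlen⟩
      · exact hbase z hz0 hz1 (hYeq ▸ hIccJ) hlen
      · exfalso
        have hsub : Ioc z y ⊆ J ∩ Ioc z 1 := fun t ht =>
          Set.mem_inter (hIccJ (Set.mem_Icc.mpr ⟨ht.1.le, ht.2⟩))
            (Set.mem_Ioc.mpr ⟨ht.1, le_trans ht.2 hy1⟩)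
        have h1 := hint_ge (Ioc z y)
          (fun t ht => Set.mem_Icc.mpr ⟨le_trans hz0.le ht.1.le, le_trans ht.2 hy1⟩)
          measurableSet_Ioc
        rw [Real.volume_Ioc, ENNReal.toReal_ofReal (by linarith)] at h1
        have h2 := hint_mono (Ioc z y) (J ∩ Ioc z 1) hsub
          (fun t ht => hJsub ht.1) (hJmeas.inter measurableSet_Ioc)
        push_cast at hfuel
        nlinarith [hm₀pos, hΘpos]
    | succ n ih =>
      intro z hz0 hz1 hzJ hgapL hfuel
      obtain ⟨y, hzy, hy1, hIccJ, hub, hgapex⟩ := hYex z hzJ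
      rcases hblock z y hz0 hzJ hgapL hIccJ hub hy1 with ⟨hYeq, hlen⟩ | ⟨hYlt, hlen⟩
      · exact hbase z hz0 hz1 (hYeq ▸ hIccJ) hlen
      · obtain ⟨z', hYz', hz'1, hz'J, hgap⟩ := hgapex hYlt
        have hy0 : 0 < y := lt_of_lt_of_le hz0 hzy
        have hz'0 : 0 < z' := lt_trans hy0 hYz'
        have hJIocsub : Ioc z y ⊆ J ∩ Ioc z 1 := fun t ht =>
          Set.mem_inter (hIccJ (Set.mem_Icc.mpr ⟨ht.1.le, ht.2⟩))
            (Set.mem_Ioc.mpr ⟨ht.1, le_trans ht.2 hy1⟩)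
        have hdisj1 : Disjoint (Ioc z y) (J ∩ Ioc z' 1) := by
          rw [Set.disjoint_left]
          intro t ht ht'
          exact absurd ht.2 (not_le.mpr (lt_trans hYz' ht'.2.1))
        have hIocsub01 : Ioc z y ⊆ Icc (0:ℝ) 1 := fun t ht =>
          Set.mem_Icc.mpr ⟨le_trans hz0.le ht.1.le, le_trans ht.2 hy1⟩
        have hintJ' : (∫ x in J ∩ Ioc z' 1, ρ x) + Θ * m₀ ≤ ∫ x in J ∩ Ioc z 1, ρ x := by
          have hu := hint_union (Ioc z y) (J ∩ Ioc z' 1) hdisj1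
            (hJmeas.inter measurableSet_Ioc) hIocsub01 (fun t ht => hJsub ht.1)
          have hm : (∫ x in Ioc z y ∪ (J ∩ Ioc z' 1), ρ x) ≤ ∫ x in J ∩ Ioc z 1, ρ x := by
            apply hint_mono _ _ (Set.union_subset hJIocsub ?_)
              (fun t ht => hJsub ht.1) (hJmeas.inter measurableSet_Ioc)
            intro t ht
            exact Set.mem_inter ht.1 (Set.mem_Ioc.mpr
              ⟨lt_trans (lt_of_le_of_lt hzy hYz') ht.2.1, ht.2.2⟩)
          have hge : Θ * m₀ ≤ ∫ x in Ioc z y, ρ x := by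
            have h1 := hint_ge (Ioc z y) hIocsub01 measurableSet_Ioc
            rw [Real.volume_Ioc, ENNReal.toReal_ofReal (by linarith)] at h1
            nlinarith [hm₀pos]
          linarith
        have hfuel' : (∫ x in J ∩ Ioc z' 1, ρ x) ≤ n * (Θ * m₀) := by
          push_cast at hfuel ⊢
          linarith
        have hGsplit : G ∩ Ioo z 1 = Ioo y z' ∪ (G ∩ Ioo z' 1) := by
          apply Set.Subset.antisymm
          · intro t ht
            have htJ : t ∉ J := ht.1.2
            have ht1 : t < 1 := ht.2.2
            have hty : y < t := by
              by_contra hc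
              push_neg at hc
              exact htJ (hIccJ (Set.mem_Icc.mpr ⟨ht.2.1.le, hc⟩))
            rcases lt_or_ge t z' with h | h
            · exact Or.inl (Set.mem_Ioo.mpr ⟨hty, h⟩)
            · refine Or.inr (Set.mem_inter ht.1 (Set.mem_Ioo.mpr ⟨?_, ht1⟩))
              rcases eq_or_lt_of_le h with he | he
              · exact absurd (he ▸ hz'J) htJ
              · exact he
          · apply Set.union_subset
            · intro t ht
              have h0t : 0 < t := lt_trans hy0 ht.1
              have ht1 : t < 1 := lt_trans ht.2 hz'1
              have htJ : t ∉ J := by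
                intro hc
                have h := Set.mem_inter ht hc
                rw [hgap] at h
                exact h
              exact Set.mem_inter (Set.mem_diff_of_mem (Set.mem_Ioo.mpr ⟨h0t, ht1⟩) htJ)
                (Set.mem_Ioo.mpr ⟨lt_of_le_of_lt hzy ht.1, ht1⟩)
            · intro t ht
              exact Set.mem_inter ht.1 (Set.mem_Ioo.mpr
                ⟨lt_trans (lt_of_le_of_lt hzy hYz') ht.2.1, ht.2.2⟩)
        have hdisjG : Disjoint (Ioo y z') (G ∩ Ioo z' 1) := by
          rw [Set.disjoint_left]
          intro t ht ht'
          exact absurd ht.2 (not_lt.mpr ht'.2.1.le)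
        have hmuHsplit : muH X H (G ∩ Ioo z 1) =
            muH X H (Ioo y z') + muH X H (G ∩ Ioo z' 1) := by
          rw [hGsplit, hmuH_union _ _ hdisjG]
        have hintGsplit : (∫ x in G ∩ Ioo z 1, ρ x) =
            (∫ x in Ioo y z', ρ x) + ∫ x in G ∩ Ioo z' 1, ρ x := by
          rw [hGsplit]
          exact hint_union _ _ hdisjG (hGmeas.inter measurableSet_Ioo)
            (fun t ht => Set.mem_Icc.mpr ⟨le_trans hy0.le ht.1.le, le_trans ht.2.le hz'1.le⟩)
            (fun t ht => hGsub ht.1)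
        have hEgap := hElow y z' hy0.le hz'1.le
        have hrec := ih z' hz'0 hz'1 hz'J
          ⟨z' - y, by linarith, by rw [show z' - (z' - y) = y by ring]; exact hgap⟩ hfuel'
        have hdiv : E H ≤ ((∫ x in J ∩ Ioc z 1, ρ x) - Θ/2 * m₀)/(Θ * m₀) * E H -
            ((∫ x in J ∩ Ioc z' 1, ρ x) - Θ/2 * m₀)/(Θ * m₀) * E H := by
          have h1 : (1:ℝ) ≤ ((∫ x in J ∩ Ioc z 1, ρ x) - (∫ x in J ∩ Ioc z' 1, ρ x))/(Θ * m₀) :=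
            (one_le_div hΘm₀).mpr (by linarith)
          have h2 := mul_le_mul_of_nonneg_right h1 (hE0 H)
          have h3 : ((∫ x in J ∩ Ioc z 1, ρ x) - (∫ x in J ∩ Ioc z' 1, ρ x))/(Θ * m₀) * E H =
              ((∫ x in J ∩ Ioc z 1, ρ x) - Θ/2 * m₀)/(Θ * m₀) * E H -
              ((∫ x in J ∩ Ioc z' 1, ρ x) - Θ/2 * m₀)/(Θ * m₀) * E H := by
            ring
          linarith
        linarith
-- final assembly
  set V := (volume J).toReal with hVdef
  have hηnn : 0 ≤ η := Real.sInf_nonneg (fun x hx => hx.1.le)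
  have hVnn : 0 ≤ V := ENNReal.toReal_nonneg
  have hδc : 0 ≤ 8 * δ / (1 - δ) := div_nonneg (by linarith) (by linarith)
  have hEc : 0 ≤ E H / (Θ * m₀) := div_nonneg (hE0 H) hΘm₀.le
  have hIJ0 : 0 ≤ ∫ x in J, ρ x := hint_nonneg J hJsub hJmeas
  have hVη : 0 ≤ V * η := mul_nonneg hVnn hηnn
  have hIccint : (∫ x in Icc (0:ℝ) 1, ρ x) = 1 := by
    rw [integral_Icc_eq_integral_Ioc, ← intervalIntegral.integral_of_le zero_le_one]
    exact hρ1
  obtain ⟨y₀, h0y, hy₀1, hIccJ₀, hub₀, hgapex₀⟩ := hYex 0 h0J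
  have hy₀ : y₀ = 1 ∨ Θ/2 ≤ y₀ := by
    have hψ := hΨpos Q₁ (le_refl _)
    have hqq := hq0 Q₁ (le_refl _)
    have hr : 0 < Ψ Q₁ / Q₁ := by positivity
    have hsub0 : Icc (0:ℝ) (min (Ψ Q₁/Q₁) 1) ⊆ J := by
      have hK := hKsub Q₁ 0 (le_refl _) hQ (Nat.zero_le _)
      simp only [Nat.cast_zero, zero_div, zero_sub, zero_add] at hK
      rwa [max_eq_right (by linarith : -(Ψ Q₁/Q₁) ≤ 0)] at hK
    have hy₀ge : min (Ψ Q₁/Q₁) 1 ≤ y₀ := hub₀ _ (min_le_right _ _) hsub0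
    rcases le_or_gt 1 (Ψ Q₁/Q₁) with hge | hlt
    · left
      rw [min_eq_right hge] at hy₀ge
      exact le_antisymm hy₀1 hy₀ge
    · right
      rw [min_eq_left hlt.le] at hy₀ge
      have := hΘle Q₁ (le_refl _) hQ
      rw [mul_div_assoc] at this
      linarith
  rcases eq_or_lt_of_le hy₀1 with hy₀eq | hy₀lt
  · have hJeq : J = Icc 0 1 := Set.Subset.antisymm hJsub (by rw [← hy₀eq]; exact hIccJ₀)
    have hmuHJ : muH X H J = 1 := by rw [hJeq]; exact hmuH_Icc
    have hIJ : (∫ x in J, ρ x) = 1 := by rw [hJeq]; exact hIccint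
    rw [hmuHJ, hIJ]
    nlinarith [mul_nonneg (add_nonneg hδc hEc) (by linarith : (0:ℝ) ≤ V * η + 1)]
  · have hy₀Θ : Θ/2 ≤ y₀ := by
      rcases hy₀ with he | h
      · exact absurd he (ne_of_lt hy₀lt)
      · exact h
    have hy₀pos : 0 < y₀ := lt_of_lt_of_le (by linarith) hy₀Θ
    obtain ⟨z₁, hy₀z₁, hz₁1, hz₁J, hgap₀⟩ := hgapex₀ hy₀lt
    have hz₁0 : 0 < z₁ := lt_trans hy₀pos hy₀z₁
    have hfuel : (∫ x in J ∩ Ioc z₁ 1, ρ x) ≤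
        (⌈(∫ x in J ∩ Ioc z₁ 1, ρ x)/(Θ * m₀)⌉₊ : ℝ) * (Θ * m₀) := by
      have h1 := Nat.le_ceil ((∫ x in J ∩ Ioc z₁ 1, ρ x)/(Θ * m₀))
      rw [div_le_iff₀ hΘm₀] at h1
      exact h1
    have hrec := hD ⌈(∫ x in J ∩ Ioc z₁ 1, ρ x)/(Θ * m₀)⌉₊ z₁ hz₁0 hz₁1 hz₁J
      ⟨z₁ - y₀, by linarith, by rw [show z₁ - (z₁ - y₀) = y₀ by ring]; exact hgap₀⟩ hfuel
    have hGsplit0 : G = Ioo y₀ z₁ ∪ (G ∩ Ioo z₁ 1) := by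
      apply Set.Subset.antisymm
      · intro t ht
        have htJ : t ∉ J := ht.2
        have ht1 : t < 1 := ht.1.2
        have hty : y₀ < t := by
          by_contra hc
          push_neg at hc
          exact htJ (hIccJ₀ (Set.mem_Icc.mpr ⟨ht.1.1.le, hc⟩))
        rcases lt_or_ge t z₁ with h | h
        · exact Or.inl (Set.mem_Ioo.mpr ⟨hty, h⟩)
        · refine Or.inr (Set.mem_inter ht (Set.mem_Ioo.mpr ⟨?_, ht1⟩))
          rcases eq_or_lt_of_le h with he | he
          · exact absurd (he ▸ hz₁J) htJ
          · exact he
      · apply Set.union_subset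
        · intro t ht
          have h0t : 0 < t := lt_trans hy₀pos ht.1
          have ht1 : t < 1 := lt_trans ht.2 hz₁1
          have htJ : t ∉ J := by
            intro hc
            have h := Set.mem_inter ht hc
            rw [hgap₀] at h
            exact h
          exact Set.mem_diff_of_mem (Set.mem_Ioo.mpr ⟨h0t, ht1⟩) htJ
        · exact Set.inter_subset_left
    have hdisjG0 : Disjoint (Ioo y₀ z₁) (G ∩ Ioo z₁ 1) := by
      rw [Set.disjoint_left]
      intro t ht ht'
      exact absurd ht.2 (not_lt.mpr ht'.2.1.le)
    have hmuH0 : muH X H G = muH X H (Ioo y₀ z₁) + muH X H (G ∩ Ioo z₁ 1) := by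
      nth_rewrite 1 [hGsplit0]
      rw [hmuH_union _ _ hdisjG0]
    have hintG0 : (∫ x in G, ρ x) = (∫ x in Ioo y₀ z₁, ρ x) + ∫ x in G ∩ Ioo z₁ 1, ρ x := by
      nth_rewrite 1 [hGsplit0]
      exact hint_union _ _ hdisjG0 (hGmeas.inter measurableSet_Ioo)
        (fun t ht => Set.mem_Icc.mpr ⟨le_trans hy₀pos.le ht.1.le, le_trans ht.2.le hz₁1.le⟩)
        (fun t ht => hGsub ht.1)
    have hEgap0 := hElow y₀ z₁ hy₀pos.le hz₁1.le
    have hintJ0 : (∫ x in J ∩ Ioc z₁ 1, ρ x) + Θ/2 * m₀ ≤ ∫ x in J, ρ x := by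
      have hdisj0 : Disjoint (Icc 0 y₀) (J ∩ Ioc z₁ 1) := by
        rw [Set.disjoint_left]
        intro t ht ht'
        exact absurd ht.2 (not_le.mpr (lt_trans hy₀z₁ ht'.2.1))
      have hu := hint_union (Icc 0 y₀) (J ∩ Ioc z₁ 1) hdisj0
        (hJmeas.inter measurableSet_Ioc)
        (fun t ht => Set.mem_Icc.mpr ⟨ht.1, le_trans ht.2 hy₀1⟩)
        (fun t ht => hJsub ht.1)
      have hm : (∫ x in Icc 0 y₀ ∪ (J ∩ Ioc z₁ 1), ρ x) ≤ ∫ x in J, ρ x := by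
        apply hint_mono _ _ (Set.union_subset hIccJ₀ Set.inter_subset_left) hJsub hJmeas
      have hge : Θ/2 * m₀ ≤ ∫ x in Icc 0 y₀, ρ x := by
        have h1 := hint_ge (Icc 0 y₀)
          (fun t ht => Set.mem_Icc.mpr ⟨ht.1, le_trans ht.2 hy₀1⟩) measurableSet_Icc
        rw [Real.volume_Icc, ENNReal.toReal_ofReal (by linarith)] at h1
        nlinarith [hm₀pos]
      linarith
    have hcoef : (1 + ((∫ x in J ∩ Ioc z₁ 1, ρ x) - Θ/2 * m₀)/(Θ * m₀)) * E H ≤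
        (∫ x in J, ρ x)/(Θ * m₀) * E H := by
      apply mul_le_mul_of_nonneg_right _ (hE0 H)
      have he : (1:ℝ) + ((∫ x in J ∩ Ioc z₁ 1, ρ x) - Θ/2 * m₀)/(Θ * m₀) =
          ((∫ x in J ∩ Ioc z₁ 1, ρ x) + Θ/2 * m₀)/(Θ * m₀) := by
        field_simp
        ring
      rw [he]
      exact (div_le_div_iff_of_pos_right hΘm₀).mpr (by linarith)
    have hmuHJle : muH X H J ≤ (∫ x in J, ρ x) + (∫ x in J, ρ x)/(Θ * m₀) * E H := by
      have hexp : (1 + ((∫ x in J ∩ Ioc z₁ 1, ρ x) - Θ/2 * m₀)/(Θ * m₀)) * E H =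
          E H + ((∫ x in J ∩ Ioc z₁ 1, ρ x) - Θ/2 * m₀)/(Θ * m₀) * E H := by ring
      have h1 : (∫ x in G, ρ x) -
          (1 + ((∫ x in J ∩ Ioc z₁ 1, ρ x) - Θ/2 * m₀)/(Θ * m₀)) * E H ≤ muH X H G := by
        rw [hmuH0, hintG0, hexp]
        linarith [hEgap0, hrec]
      linarith [hmuH_JG, hint_total, hcoef, h1]
    have hZ : (8 * δ / (1 - δ) + E H / (Θ * m₀)) * (V * η + ∫ x in J, ρ x) =
        (8 * δ / (1 - δ)) * (V * η + ∫ x in J, ρ x) + (E H / (Θ * m₀)) * (V * η) +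
        (E H / (Θ * m₀)) * (∫ x in J, ρ x) := by ring
    have hring : E H / (Θ * m₀) * (∫ x in J, ρ x) = (∫ x in J, ρ x)/(Θ * m₀) * E H := by
      ring
    linarith [hmuHJle, hZ, hring, mul_nonneg hδc (add_nonneg hVη hIJ0),
      mul_nonneg hEc hVη, hVη, hIJ0]
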